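/- Let A_0 = [0, 1/3) × ℤ₂ × ℤ₃ ⊆ F. The image of A_0 under multiplication by 3/2 on G/Γ, computed in F, is {rep((3/2)·y) : y ∈ A_0} = ([0, 1/2) × ℤ₂ × 3ℤ₃) ∪ ([1/2, 1) × ℤ₂ × (3ℤ₃ + 2)), where 3ℤ₃ = {3w : w ∈ ℤ₃} and 3ℤ₃ + 2 = {3w + 2 : w ∈ ℤ₃}. -/

import Mathlib

open Set

noncomputable section

/-- The ambient group `G = ℝ × ℚ₂ × ℚ₃`. -/
abbrev G : Type := ℝ × ℚ_[2] × ℚ_[3]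

/-- The diagonal embedding of `ℚ` into `G`. -/
def Δ (r : ℚ) : G := ((r : ℝ), (r : ℚ_[2]), (r : ℚ_[3]))

/-- `ℤ[1/6]`, the rationals expressible with denominator `6^k`. -/
def zInv6 : Set ℚ := {q | ∃ (z : ℤ) (k : ℕ), q = z / 6 ^ k}

/-- `Γ = Δ(ℤ[1/6])`. -/
def Γ : Set G := Δ '' zInv6

/-- The fundamental domain `F = [0,1) × ℤ₂ × ℤ₃`. -/
def F : Set G := {x | x.1 ∈ Set.Ico (0 : ℝ) 1 ∧ ‖x.2.1‖ ≤ 1 ∧ ‖x.2.2‖ ≤ 1}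

/-- Coordinatewise multiplication by a rational on `G`. -/
def act (q : ℚ) (x : G) : G :=
  ((q : ℝ) * x.1, (q : ℚ_[2]) * x.2.1, (q : ℚ_[3]) * x.2.2)

/-! ### Auxiliary lemmas -/

lemma zInv6_sub {a b : ℚ} (ha : a ∈ zInv6) (hb : b ∈ zInv6) : a - b ∈ zInv6 := by
  obtain ⟨z, k, rfl⟩ := ha
  obtain ⟨w, m, rfl⟩ := hb
  exact ⟨z * 6 ^ m - w * 6 ^ k, k + m, by push_cast; field_simp; ring⟩

lemma Δ_sub (a b : ℚ) : Δ (a - b) = Δ a - Δ b := by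
  simp [Δ, Prod.ext_iff]

lemma Γ_sub {x y : G} (hx : x ∈ Γ) (hy : y ∈ Γ) : x - y ∈ Γ := by
  obtain ⟨a, ha, rfl⟩ := hx
  obtain ⟨b, hb, rfl⟩ := hy
  exact ⟨a - b, zInv6_sub ha hb, Δ_sub a b⟩

lemma half_mem_zInv6 : (1/2 : ℚ) ∈ zInv6 := ⟨3, 1, by norm_num⟩
lemma neg_half_mem_zInv6 : (-(1/2) : ℚ) ∈ zInv6 := ⟨-3, 1, by norm_num⟩
lemma zero_mem_zInv6 : (0 : ℚ) ∈ zInv6 := ⟨0, 0, by norm_num⟩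

lemma zero_mem_Γ : (0 : G) ∈ Γ := ⟨0, zero_mem_zInv6, by simp [Δ, Prod.ext_iff]⟩

lemma n2_two : ‖(2 : ℚ_[2])‖ = 2⁻¹ := by
  have h := @Padic.norm_p 2 _
  have h2 : ((2 : ℕ) : ℚ_[2]) = 2 := by norm_cast
  rw [h2] at h
  simpa using h

lemma n2_three : ‖(3 : ℚ_[2])‖ = 1 := by
  have h : ((3 : ℤ) : ℚ_[2]) = 3 := by norm_cast
  have hle : ‖((3 : ℤ) : ℚ_[2])‖ ≤ 1 := Padic.norm_int_le_one 3
  have hlt : ¬ ‖((3 : ℤ) : ℚ_[2])‖ < 1 := by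
    rw [Padic.norm_intCast_lt_one_iff]; decide
  rw [h] at hle hlt
  linarith [(lt_or_eq_of_le hle).resolve_left hlt]

lemma n3_three : ‖(3 : ℚ_[3])‖ = 3⁻¹ := by
  have h := @Padic.norm_p 3 _
  have h3 : ((3 : ℕ) : ℚ_[3]) = 3 := by norm_cast
  rw [h3] at h
  simpa using h

lemma n3_two : ‖(2 : ℚ_[3])‖ = 1 := by
  have h : ((2 : ℤ) : ℚ_[3]) = 2 := by norm_cast
  have hle : ‖((2 : ℤ) : ℚ_[3])‖ ≤ 1 := Padic.norm_int_le_one 2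
  have hlt : ¬ ‖((2 : ℤ) : ℚ_[3])‖ < 1 := by
    rw [Padic.norm_intCast_lt_one_iff]; decide
  rw [h] at hle hlt
  linarith [(lt_or_eq_of_le hle).resolve_left hlt]

lemma padicNorm_pow (p : ℕ) [Fact p.Prime] (q : ℚ) (k : ℕ) :
    padicNorm p (q ^ k) = padicNorm p q ^ k := by
  induction k with
  | zero => simp
  | succ n ih => rw [pow_succ, pow_succ, padicNorm.mul, ih]

/-- The key rationality lemma: a `6`-smooth rational which is a `2`-adic and `3`-adic
integer and has absolute value `< 1` is zero. -/
lemma rat_eq_zero (q : ℚ) (hq : q ∈ zInv6) (h2 : ‖(q : ℚ_[2])‖ ≤ 1)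
    (h3 : ‖(q : ℚ_[3])‖ ≤ 1) (hr : |(q : ℝ)| < 1) : q = 0 := by
  obtain ⟨z, k, rfl⟩ := hq
  have h6 : ((6 : ℚ) ^ k) ≠ 0 := by positivity
  have hmul : (z : ℚ) = ((z : ℚ) / 6 ^ k) * (6 : ℚ) ^ k := by field_simp
  have p2 : padicNorm 2 ((z : ℚ) / 6 ^ k) ≤ 1 := by
    have h := Padic.eq_padicNorm (p := 2) ((z : ℚ) / 6 ^ k)
    rw [h] at h2; exact_mod_cast h2
  have p3 : padicNorm 3 ((z : ℚ) / 6 ^ k) ≤ 1 := by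
    have h := Padic.eq_padicNorm (p := 3) ((z : ℚ) / 6 ^ k)
    rw [h] at h3; exact_mod_cast h3
  have h62 : padicNorm 2 (6 : ℚ) = 2⁻¹ := by
    have h6eq : (6 : ℚ) = (2 : ℚ) * 3 := by norm_num
    have hp2 : padicNorm 2 (2 : ℚ) = (2 : ℚ)⁻¹ := by
      simpa using padicNorm.padicNorm_p_of_prime (p := 2)
    have hp3 : padicNorm 2 (3 : ℚ) = 1 := by
      have h := (padicNorm.int_eq_one_iff (p := 2) 3).2 (by decide)
      simpa using h
    rw [h6eq, padicNorm.mul, hp2, hp3, mul_one]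
  have h63 : padicNorm 3 (6 : ℚ) = 3⁻¹ := by
    have h6eq : (6 : ℚ) = (3 : ℚ) * 2 := by norm_num
    have hp3 : padicNorm 3 (3 : ℚ) = (3 : ℚ)⁻¹ := by
      simpa using padicNorm.padicNorm_p_of_prime (p := 3)
    have hp2 : padicNorm 3 (2 : ℚ) = 1 := by
      have h := (padicNorm.int_eq_one_iff (p := 3) 2).2 (by decide)
      simpa using h
    rw [h6eq, padicNorm.mul, hp3, hp2, mul_one]
  have hz2 : padicNorm 2 (z : ℚ) ≤ (2 : ℚ) ^ (-(k : ℤ)) := by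
    calc padicNorm 2 (z : ℚ)
        = padicNorm 2 ((z : ℚ) / 6 ^ k) * padicNorm 2 ((6 : ℚ) ^ k) := by
          rw [← padicNorm.mul, ← hmul]
      _ ≤ 1 * ((2 : ℚ)⁻¹) ^ k := by
          apply mul_le_mul p2 _ (padicNorm.nonneg _) zero_le_one
          rw [padicNorm_pow, h62]
      _ = (2 : ℚ) ^ (-(k : ℤ)) := by
          rw [one_mul, inv_pow, zpow_neg, zpow_natCast]
  have hz3 : padicNorm 3 (z : ℚ) ≤ (3 : ℚ) ^ (-(k : ℤ)) := by
    calc padicNorm 3 (z : ℚ)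
        = padicNorm 3 ((z : ℚ) / 6 ^ k) * padicNorm 3 ((6 : ℚ) ^ k) := by
          rw [← padicNorm.mul, ← hmul]
      _ ≤ 1 * ((3 : ℚ)⁻¹) ^ k := by
          apply mul_le_mul p3 _ (padicNorm.nonneg _) zero_le_one
          rw [padicNorm_pow, h63]
      _ = (3 : ℚ) ^ (-(k : ℤ)) := by
          rw [one_mul, inv_pow, zpow_neg, zpow_natCast]
  have d2 : ((2 ^ k : ℕ) : ℤ) ∣ z := (padicNorm.dvd_iff_norm_le (p := 2)).2 hz2
  have d3 : ((3 ^ k : ℕ) : ℤ) ∣ z := (padicNorm.dvd_iff_norm_le (p := 3)).2 hz3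
  have hco : IsCoprime ((2 : ℤ) ^ k) ((3 : ℤ) ^ k) := by
    apply IsCoprime.pow
    rw [Int.isCoprime_iff_gcd_eq_one]; decide
  have d6 : (6 : ℤ) ^ k ∣ z := by
    have : (2 : ℤ) ^ k * (3 : ℤ) ^ k ∣ z := by
      apply hco.mul_dvd
      · exact_mod_cast d2
      · exact_mod_cast d3
    have h66 : (6 : ℤ) ^ k = (2 : ℤ) ^ k * (3 : ℤ) ^ k := by
      rw [← mul_pow]; norm_num
    rwa [h66]
  obtain ⟨m, rfl⟩ := d6
  have hqm : ((6 ^ k * m : ℤ) : ℚ) / 6 ^ k = (m : ℚ) := by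
    push_cast
    rw [mul_comm ((6 : ℚ) ^ k) (m : ℚ), mul_div_assoc, div_self h6, mul_one]
  rw [hqm] at hr ⊢
  have hm : |m| < 1 := by exact_mod_cast hr
  have : m = 0 := by
    rcases abs_lt.mp hm with ⟨h1, h2⟩
    omega
  simp [this]

/-- Uniqueness of the representative in `F`. -/
lemma uniqF {x y : G} (hx : x ∈ F) (hy : y ∈ F) (h : x - y ∈ Γ) : x = y := by
  obtain ⟨q, hq, hΔ⟩ := h
  obtain ⟨⟨hx1, hx1'⟩, hx2, hx3⟩ := hx
  obtain ⟨⟨hy1, hy1'⟩, hy2, hy3⟩ := hy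
  have h1 : (q : ℝ) = x.1 - y.1 := congrArg Prod.fst hΔ
  have h2 : (q : ℚ_[2]) = x.2.1 - y.2.1 := congrArg (fun z => z.2.1) hΔ
  have h3 : (q : ℚ_[3]) = x.2.2 - y.2.2 := congrArg (fun z => z.2.2) hΔ
  have hq0 : q = 0 := by
    apply rat_eq_zero q hq
    · rw [h2, sub_eq_add_neg]
      calc ‖x.2.1 + -y.2.1‖ ≤ max ‖x.2.1‖ ‖-y.2.1‖ := Padic.nonarchimedean _ _
        _ ≤ 1 := by rw [norm_neg]; exact max_le hx2 hy2
    · rw [h3, sub_eq_add_neg]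
      calc ‖x.2.2 + -y.2.2‖ ≤ max ‖x.2.2‖ ‖-y.2.2‖ := Padic.nonarchimedean _ _
        _ ≤ 1 := by rw [norm_neg]; exact max_le hx3 hy3
    · rw [h1, abs_lt]; constructor <;> linarith
  rw [hq0] at hΔ
  have : x - y = 0 := by
    rw [← hΔ]; simp [Δ, Prod.ext_iff]
  have := sub_eq_zero.mp this
  exact this

/-- Parity dichotomy in `ℤ_[2]`. -/
lemma two_dichotomy (z : ℤ_[2]) :
    (∃ t : ℤ_[2], z = 2 * t) ∨ (∃ t : ℤ_[2], z = 2 * t - 1) := by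
  have hz2 : ∀ r : ZMod 2, r = 0 ∨ r = 1 := by decide
  have key : ∀ w : ℤ_[2], PadicInt.toZMod w = 0 → ∃ t : ℤ_[2], w = 2 * t := by
    intro w hw
    have : w ∈ RingHom.ker (PadicInt.toZMod : ℤ_[2] →+* ZMod 2) := hw
    rw [PadicInt.ker_toZMod, PadicInt.maximalIdeal_eq_span_p,
      Ideal.mem_span_singleton] at this
    obtain ⟨t, ht⟩ := this
    refine ⟨t, ?_⟩
    rw [ht]
    norm_num
  rcases hz2 (PadicInt.toZMod z) with h | h
  · exact Or.inl (key z h)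
  · right
    have h1 : PadicInt.toZMod (z + 1) = 0 := by
      rw [map_add, map_one, h]; decide
    obtain ⟨t, ht⟩ := key _ h1
    exact ⟨t, eq_sub_of_add_eq ht⟩

set_option maxHeartbeats 1600000 in
/-- The image of the atom `A₀ = [0,1/3) × ℤ₂ × ℤ₃` under multiplication by `3/2` on
`G/Γ`, computed in `F`, is `([0,1/2) × ℤ₂ × 3ℤ₃) ∪ ([1/2,1) × ℤ₂ × (3ℤ₃+2))`. -/
theorem image_A0_three_halves (rep : G → G)
    (hrep : ∀ x : G, rep x ∈ F ∧ x - rep x ∈ Γ) :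
    (fun y => rep (act (3 / 2) y)) ''
        {x : G | x.1 ∈ Set.Ico (0 : ℝ) (1 / 3) ∧ ‖x.2.1‖ ≤ 1 ∧ ‖x.2.2‖ ≤ 1} =
      {u : G | u.1 ∈ Set.Ico (0 : ℝ) (1 / 2) ∧ ‖u.2.1‖ ≤ 1 ∧
          ∃ w : ℚ_[3], ‖w‖ ≤ 1 ∧ u.2.2 = 3 * w} ∪
      {u : G | u.1 ∈ Set.Ico (1 / 2 : ℝ) 1 ∧ ‖u.2.1‖ ≤ 1 ∧
          ∃ w : ℚ_[3], ‖w‖ ≤ 1 ∧ u.2.2 = 3 * w + 2} := by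
  have hcast2 : ((3 / 2 : ℚ) : ℚ_[2]) = 3 / 2 := by push_cast; ring
  have hcast3 : ((3 / 2 : ℚ) : ℚ_[3]) = 3 / 2 := by push_cast; ring
  have hcastR : ((3 / 2 : ℚ) : ℝ) = 3 / 2 := by push_cast; ring
  have htwo2 : (2 : ℚ_[2]) ≠ 0 := by
    intro h; have := n2_two; rw [h] at this; simp at this
  have htwo3 : (2 : ℚ_[3]) ≠ 0 := by
    intro h; have := n3_two; rw [h] at this; simp at this
  ext u
  constructor
  · rintro ⟨⟨t, a, b⟩, ⟨⟨ht0, ht1⟩, ha, hb⟩, rfl⟩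
    simp only at ht0 ht1 ha hb
    set x : G := act (3/2) (t, a, b) with hx
    -- 3-adic norm bound for (3/2)*b
    have hb3 : ‖((3 / 2 : ℚ) : ℚ_[3]) * b‖ ≤ 3⁻¹ := by
      rw [hcast3, norm_mul, norm_div, n3_three, n3_two]
      calc 3⁻¹ / 1 * ‖b‖ ≤ 3⁻¹ / 1 * 1 := by
            apply mul_le_mul_of_nonneg_left hb; norm_num
        _ = 3⁻¹ := by norm_num
    rcases two_dichotomy (3 * ⟨a, ha⟩) with ⟨t2, ht2⟩ | ⟨t2, ht2⟩
    · -- even case: rep x = x, lands in the left set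
      have ht2' : (3 : ℚ_[2]) * a = 2 * (t2 : ℚ_[2]) := by
        exact_mod_cast congrArg (fun z : ℤ_[2] => (z : ℚ_[2])) ht2
      have hx2 : ((3 / 2 : ℚ) : ℚ_[2]) * a = (t2 : ℚ_[2]) := by
        rw [hcast2]
        field_simp
        linear_combination ht2'
      have hxF : x ∈ F := by
        refine ⟨⟨?_, ?_⟩, ?_, ?_⟩
        · simp only [hx, act, hcastR]; positivity
        · simp only [hx, act, hcastR]; linarith
        · simp only [hx, act, hx2]; exact t2.2
        · simp only [hx, act]; linarith [hb3]
      have hrepx : rep x = x := by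
        apply uniqF (hrep x).1 hxF
        have h := Γ_sub zero_mem_Γ (hrep x).2
        have he : (0 : G) - (x - rep x) = rep x - x := by abel
        rwa [he] at h
      show rep x ∈ _
      rw [hrepx]
      left
      refine ⟨⟨by simp only [hx, act, hcastR]; positivity,
        by simp only [hx, act, hcastR]; linarith⟩,
        by simp only [hx, act, hx2]; exact t2.2, 2⁻¹ * b, ?_, ?_⟩
      · have hnb : ‖(2⁻¹ : ℚ_[3]) * b‖ = ‖b‖ := by
          rw [norm_mul, norm_inv, n3_two]; norm_num
        rw [hnb]; exact hb
      · simp only [hx, act, hcast3]; ring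
    · -- odd case: rep x = x + Δ(1/2), lands in the right set
      have ht2' : (3 : ℚ_[2]) * a = 2 * (t2 : ℚ_[2]) - 1 := by
        exact_mod_cast congrArg (fun z : ℤ_[2] => (z : ℚ_[2])) ht2
      set c : G := (((3 / 2 : ℚ) : ℝ) * t + 1/2,
        ((3 / 2 : ℚ) : ℚ_[2]) * a + 1/2, ((3 / 2 : ℚ) : ℚ_[3]) * b + 1/2) with hc
      have hc2 : ((3 / 2 : ℚ) : ℚ_[2]) * a + 1/2 = (t2 : ℚ_[2]) := by
        rw [hcast2]
        field_simp
        linear_combination ht2'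
      have hhalf3 : ‖(1/2 : ℚ_[3])‖ = 1 := by
        rw [one_div, norm_inv, n3_two]; norm_num
      have hc3 : ‖((3 / 2 : ℚ) : ℚ_[3]) * b + 1/2‖ ≤ 1 := by
        calc ‖((3 / 2 : ℚ) : ℚ_[3]) * b + 1/2‖
            ≤ max ‖((3 / 2 : ℚ) : ℚ_[3]) * b‖ ‖(1/2 : ℚ_[3])‖ :=
              Padic.nonarchimedean _ _
          _ ≤ 1 := max_le (by linarith [hb3]) (le_of_eq hhalf3)
      have hcF : c ∈ F := by
        refine ⟨⟨?_, ?_⟩, ?_, ?_⟩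
        · simp only [hc, hcastR]; nlinarith
        · simp only [hc, hcastR]; nlinarith
        · simp only [hc, hc2]; exact t2.2
        · simp only [hc]; exact hc3
      have hxc : x - c ∈ Γ := by
        refine ⟨-(1/2), neg_half_mem_zInv6, ?_⟩
        simp only [Δ, hx, hc, act, Prod.ext_iff, Prod.fst_sub, Prod.snd_sub]
        refine ⟨by push_cast; ring, by push_cast; ring, by push_cast; ring⟩
      have hrepx : rep x = c := by
        apply uniqF (hrep x).1 hcF
        have h := Γ_sub hxc (hrep x).2
        have he : (x - c) - (x - rep x) = rep x - c := by abel
        rwa [he] at h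
      show rep x ∈ _
      rw [hrepx]
      right
      refine ⟨⟨by simp only [hc, hcastR]; nlinarith,
        by simp only [hc, hcastR]; nlinarith⟩,
        by simp only [hc, hc2]; exact t2.2, 2⁻¹ * b - 2⁻¹, ?_, ?_⟩
      · have : (2⁻¹ : ℚ_[3]) * b - 2⁻¹ = 2⁻¹ * (b - 1) := by ring
        rw [this, norm_mul, norm_inv, n3_two]
        have hb1 : ‖b - 1‖ ≤ 1 := by
          rw [sub_eq_add_neg]
          calc ‖b + -1‖ ≤ max ‖b‖ ‖(-1 : ℚ_[3])‖ := Padic.nonarchimedean _ _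
            _ ≤ 1 := max_le hb (by simp)
        simpa using hb1
      · simp only [hc, hcast3]; ring
  · rintro (⟨⟨hs0, hs1⟩, hc, w, hw, hu3⟩ | ⟨⟨hs0, hs1⟩, hc, w, hw, hu3⟩)
    · -- left piece
      set y : G := ((2 : ℝ)/3 * u.1, (2/3 : ℚ_[2]) * u.2.1, 2 * w) with hy
      have hyA : y.1 ∈ Set.Ico (0 : ℝ) (1/3) ∧ ‖y.2.1‖ ≤ 1 ∧ ‖y.2.2‖ ≤ 1 := by
        refine ⟨⟨by simp only [hy]; positivity, by simp only [hy]; linarith⟩, ?_, ?_⟩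
        · simp only [hy, norm_mul, norm_div, n2_two, n2_three]
          nlinarith [norm_nonneg u.2.1]
        · simp only [hy, norm_mul, n3_two]; simpa using hw
      have hact : act (3/2) y = u := by
        have h1 : ((3 / 2 : ℚ) : ℝ) * ((2 : ℝ)/3 * u.1) = u.1 := by
          rw [hcastR]; ring
        have h2 : ((3 / 2 : ℚ) : ℚ_[2]) * ((2/3 : ℚ_[2]) * u.2.1) = u.2.1 := by
          rw [hcast2]
          have h3ne : (3 : ℚ_[2]) ≠ 0 := by
            intro h; have := n2_three; rw [h] at this; simp at this
          field_simp
        have h3 : ((3 / 2 : ℚ) : ℚ_[3]) * (2 * w) = u.2.2 := by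
          rw [hcast3, hu3]; field_simp
        simp only [act, hy]
        exact Prod.ext h1 (Prod.ext h2 h3)
      have huF : u ∈ F := by
        refine ⟨⟨hs0, by linarith⟩, hc, ?_⟩
        rw [hu3, norm_mul, n3_three]
        nlinarith
      refine ⟨y, hyA, ?_⟩
      simp only
      rw [hact]
      exact (uniqF huF (hrep u).1 (hrep u).2).symm
    · -- right piece
      set y : G := ((2 : ℝ)/3 * (u.1 - 1/2), (2/3 : ℚ_[2]) * (u.2.1 - 1/2), 2 * w + 1)
        with hy
      have hhalf2 : ‖(1/2 : ℚ_[2])‖ = 2 := by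
        rw [one_div, norm_inv, n2_two]; norm_num
      have hyA : y.1 ∈ Set.Ico (0 : ℝ) (1/3) ∧ ‖y.2.1‖ ≤ 1 ∧ ‖y.2.2‖ ≤ 1 := by
        refine ⟨⟨by simp only [hy]; nlinarith, by simp only [hy]; nlinarith⟩, ?_, ?_⟩
        · have hsub : ‖u.2.1 - 1/2‖ ≤ 2 := by
            rw [sub_eq_add_neg]
            calc ‖u.2.1 + -(1/2)‖ ≤ max ‖u.2.1‖ ‖(-(1/2) : ℚ_[2])‖ :=
                Padic.nonarchimedean _ _
              _ ≤ 2 := max_le (by linarith) (by rw [norm_neg, hhalf2])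
          simp only [hy, norm_mul, norm_div, n2_two, n2_three]
          nlinarith [norm_nonneg (u.2.1 - 1/2)]
        · simp only [hy]
          calc ‖2 * w + 1‖ ≤ max ‖(2 : ℚ_[3]) * w‖ ‖(1 : ℚ_[3])‖ :=
              Padic.nonarchimedean _ _
            _ ≤ 1 := max_le (by rw [norm_mul, n3_two]; simpa using hw) (by simp)
      have huF : u ∈ F := by
        refine ⟨⟨by linarith, hs1⟩, hc, ?_⟩
        rw [hu3]
        calc ‖(3 : ℚ_[3]) * w + 2‖ ≤ max ‖(3 : ℚ_[3]) * w‖ ‖(2 : ℚ_[3])‖ :=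
            Padic.nonarchimedean _ _
          _ ≤ 1 := by
            apply max_le _ (le_of_eq n3_two)
            rw [norm_mul, n3_three]; nlinarith
      set x' : G := act (3/2) y with hx'
      have hxu : x' - u ∈ Γ := by
        refine ⟨-(1/2), neg_half_mem_zInv6, ?_⟩
        simp only [Δ, hx', hy, act, Prod.ext_iff, Prod.fst_sub, Prod.snd_sub]
        have h3ne : (3 : ℚ_[2]) ≠ 0 := by
          intro h; have := n2_three; rw [h] at this; simp at this
        refine ⟨by rw [hcastR]; push_cast; ring, ?_, ?_⟩
        · rw [hcast2]; push_cast; field_simp; ring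
        · rw [hcast3, hu3]; push_cast; field_simp; ring
      have hrepx : rep x' = u := by
        apply uniqF (hrep x').1 huF
        have h := Γ_sub hxu (hrep x').2
        have he : (x' - u) - (x' - rep x') = rep x' - u := by abel
        rwa [he] at h
      exact ⟨y, hyA, hrepx⟩
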